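/- Second-order error estimate for the prototypical method: assume there are constants C_Π > 0 and H > 0 such that |v − Π_H v|_{M,T} ≤ C_Π H |v|_{L,T} for every element T ∈ 𝒯_H and every v : 𝒩 → ℝ. Let f̃ : 𝒩 → ℝ be defined by f(x) = m(x) f̃(x) for every node x, where m(x) = ½ Σ_{y∼x} |x−y|^{2−α} > 0 is the diagonal entry of M at x. Then the Galerkin approximation u_H satisfies |u − u_H|_L ≤ C_Π γ⁻¹ H |f̃ − Π_H f̃|_M ≤ C_Π² γ⁻¹ H² |f̃|_L. -/

import Mathlib

open Finset

variable {n : ℕ} {N : Type*}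

/-- The (edge-weighted) mass bilinear form `(M_S u, v)`. -/
noncomputable def Mform [Fintype N] (G : SimpleGraph N) [DecidableRel G.Adj]
    (pos : N → EuclideanSpace ℝ (Fin n)) (α : ℝ) (S : Finset N) (u v : N → ℝ) : ℝ :=
  ∑ x ∈ S, (1 / 2 : ℝ) * ∑ y ∈ G.neighborFinset x,
    dist (pos x) (pos y) ^ ((2 : ℝ) - α) * (u x * v x)

/-- The (edge-weighted) stiffness bilinear form `(L_S u, v)`. -/
noncomputable def Lform [Fintype N] (G : SimpleGraph N) [DecidableRel G.Adj]
    (pos : N → EuclideanSpace ℝ (Fin n)) (α : ℝ) (S : Finset N) (u v : N → ℝ) : ℝ :=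
  ∑ x ∈ S, (1 / 2 : ℝ) * ∑ y ∈ G.neighborFinset x,
    ((u x - u y) * (v x - v y)) / dist (pos x) (pos y) ^ α

/-- `|v|_{M,S}`. -/
noncomputable def Mnorm [Fintype N] (G : SimpleGraph N) [DecidableRel G.Adj]
    (pos : N → EuclideanSpace ℝ (Fin n)) (α : ℝ) (S : Finset N) (v : N → ℝ) : ℝ :=
  Real.sqrt (Mform G pos α S v v)

/-- `|v|_{L,S}`. -/
noncomputable def Lnorm [Fintype N] (G : SimpleGraph N) [DecidableRel G.Adj]
    (pos : N → EuclideanSpace ℝ (Fin n)) (α : ℝ) (S : Finset N) (v : N → ℝ) : ℝ :=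
  Real.sqrt (Lform G pos α S v v)

/-- The element average `q_T(v) = (M_T v, 1) / |1|_{M,T}^2`. -/
noncomputable def avg [Fintype N] (G : SimpleGraph N) [DecidableRel G.Adj]
    (pos : N → EuclideanSpace ℝ (Fin n)) (α : ℝ) (T : Finset N) (v : N → ℝ) : ℝ :=
  Mform G pos α T v (fun _ => 1) / Mform G pos α T (fun _ => 1) (fun _ => 1)

/-- Euclidean inner product of functions on the node set. -/
noncomputable def ip [Fintype N] (u v : N → ℝ) : ℝ := ∑ x, u x * v x

/-- Length of a walk: the sum of Euclidean edge lengths. -/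
noncomputable def wlen (G : SimpleGraph N) (pos : N → EuclideanSpace ℝ (Fin n))
    {x y : N} (w : G.Walk x y) : ℝ :=
  (w.darts.map (fun d => dist (pos d.toProd.1) (pos d.toProd.2))).sum

/-- Graph distance from `x` to the boundary set `bnd`, along paths inside `T`. -/
noncomputable def distT (G : SimpleGraph N) (pos : N → EuclideanSpace ℝ (Fin n))
    (T bnd : Finset N) (x : N) : ℝ :=
  sInf {ℓ : ℝ | ∃ y ∈ bnd, ∃ w : G.Walk x y, (∀ z ∈ w.support, z ∈ T) ∧ ℓ = wlen G pos w}

/-- The non-normalized bubble function `b̃_T`. -/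
noncomputable def btilde [DecidableEq N] (G : SimpleGraph N) (pos : N → EuclideanSpace ℝ (Fin n))
    (T bnd : Finset N) : N → ℝ :=
  fun x => if x ∈ T then distT G pos T bnd x else 0

/-! ### Auxiliary machinery -/

/-- The diagonal weight `m(x)` of the mass matrix. -/
noncomputable def mfun [Fintype N] (G : SimpleGraph N) [DecidableRel G.Adj]
    (pos : N → EuclideanSpace ℝ (Fin n)) (α : ℝ) (x : N) : ℝ :=
  (1 / 2 : ℝ) * ∑ y ∈ G.neighborFinset x, dist (pos x) (pos y) ^ ((2 : ℝ) - α)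

section Aux
variable [Fintype N] (G : SimpleGraph N) [DecidableRel G.Adj]
  (pos : N → EuclideanSpace ℝ (Fin n)) (α : ℝ)

lemma mfun_nonneg (x : N) : 0 ≤ mfun G pos α x :=
  mul_nonneg (by norm_num)
    (Finset.sum_nonneg fun y _ => Real.rpow_nonneg dist_nonneg _)

lemma Mform_eq (S : Finset N) (u v : N → ℝ) :
    Mform G pos α S u v = ∑ x ∈ S, mfun G pos α x * (u x * v x) := by
  unfold Mform mfun
  refine Finset.sum_congr rfl fun x _ => ?_
  rw [← Finset.sum_mul, ← mul_assoc]

lemma Mform_nonneg (S : Finset N) (v : N → ℝ) : 0 ≤ Mform G pos α S v v := by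
  rw [Mform_eq]
  exact Finset.sum_nonneg fun x _ =>
    mul_nonneg (mfun_nonneg G pos α x) (mul_self_nonneg _)

lemma Lform_nonneg (S : Finset N) (v : N → ℝ) : 0 ≤ Lform G pos α S v v := by
  refine Finset.sum_nonneg fun x _ => mul_nonneg (by norm_num) ?_
  exact Finset.sum_nonneg fun y _ =>
    div_nonneg (mul_self_nonneg _) (Real.rpow_nonneg dist_nonneg _)

end Aux

lemma sum_partition [Fintype N] [DecidableEq N] {P : Finset (Finset N)}
    (hPdisj : ∀ T ∈ P, ∀ S ∈ P, T ≠ S → Disjoint T S)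
    (hPcover : ∀ x : N, ∃ T ∈ P, x ∈ T) (g : N → ℝ) :
    ∑ T ∈ P, ∑ x ∈ T, g x = ∑ x, g x := by
  have hU : (Finset.univ : Finset N) = P.biUnion (fun T => T) := by
    ext x
    simp only [Finset.mem_univ, Finset.mem_biUnion, true_iff]
    exact hPcover x
  rw [hU, Finset.sum_biUnion (fun T hT S hS hTS => hPdisj T hT S hS hTS)]

lemma weighted_cs [Fintype N] (m a b : N → ℝ) (hm : ∀ x, 0 ≤ m x) :
    ∑ x, m x * (a x * b x) ≤
      Real.sqrt (∑ x, m x * (a x * a x)) * Real.sqrt (∑ x, m x * (b x * b x)) := by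
  have h := Real.sum_mul_le_sqrt_mul_sqrt Finset.univ
    (fun x => Real.sqrt (m x) * a x) (fun x => Real.sqrt (m x) * b x)
  have e1 : ∀ x : N, (Real.sqrt (m x) * a x) * (Real.sqrt (m x) * b x) = m x * (a x * b x) := by
    intro x
    rw [show (Real.sqrt (m x) * a x) * (Real.sqrt (m x) * b x)
        = (Real.sqrt (m x) * Real.sqrt (m x)) * (a x * b x) from by ring,
      Real.mul_self_sqrt (hm x)]
  have e2 : ∀ c : N → ℝ, ∀ x : N, (Real.sqrt (m x) * c x) ^ 2 = m x * (c x * c x) := by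
    intro c x
    rw [mul_pow, Real.sq_sqrt (hm x), sq]
  calc ∑ x, m x * (a x * b x)
      = ∑ x, (Real.sqrt (m x) * a x) * (Real.sqrt (m x) * b x) :=
        (Finset.sum_congr rfl fun x _ => e1 x).symm
    _ ≤ Real.sqrt (∑ x, (Real.sqrt (m x) * a x) ^ 2) *
        Real.sqrt (∑ x, (Real.sqrt (m x) * b x) ^ 2) := h
    _ = _ := by
        rw [Finset.sum_congr rfl fun x _ => e2 a x, Finset.sum_congr rfl fun x _ => e2 b x]

lemma sq_le_of_sqrt_le {X C : ℝ} (hX : 0 ≤ X) (h : Real.sqrt X ≤ C) : X ≤ C ^ 2 := by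
  nlinarith [Real.sq_sqrt hX, Real.sqrt_nonneg X]

/-- The energy bilinear form `B(u,v) = (K u, v)`. -/
noncomputable def Bform [Fintype N] (K : (N → ℝ) →ₗ[ℝ] (N → ℝ)) :
    LinearMap.BilinForm ℝ (N → ℝ) :=
  LinearMap.mk₂ ℝ (fun u v => ip (K u) v)
    (fun u u' v => by simp [ip, map_add, Pi.add_apply, add_mul, Finset.sum_add_distrib])
    (fun c u v => by
      simp [ip, map_smul, Pi.smul_apply, smul_eq_mul, Finset.mul_sum, mul_assoc])
    (fun u v v' => by simp [ip, mul_add, Finset.sum_add_distrib])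
    (fun c u v => by simp [ip, Finset.mul_sum, mul_left_comm])

lemma ip_comm [Fintype N] (u v : N → ℝ) : ip u v = ip v u := by
  simp [ip, mul_comm]

lemma ip_sub_right [Fintype N] (a u v : N → ℝ) :
    ip a (fun x => u x - v x) = ip a u - ip a v := by
  simp [ip, mul_sub, Finset.sum_sub_distrib]

lemma ip_sub_left [Fintype N] (u v a : N → ℝ) :
    ip (u - v) a = ip u a - ip v a := by
  simp [ip, Pi.sub_apply, sub_mul, Finset.sum_sub_distrib]

/-- The fine-scale space `W`. -/
noncomputable def Wsub [Fintype N] (G : SimpleGraph N) [DecidableRel G.Adj]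
    (pos : N → EuclideanSpace ℝ (Fin n)) (α : ℝ) (Γ : Set N) (P : Finset (Finset N)) :
    Submodule ℝ (N → ℝ) where
  carrier := {v | (∀ x ∈ Γ, v x = 0) ∧ ∀ T ∈ P, ∑ x ∈ T, mfun G pos α x * v x = 0}
  add_mem' := by
    rintro a b ⟨ha1, ha2⟩ ⟨hb1, hb2⟩
    refine ⟨fun x hx => by simp [Pi.add_apply, ha1 x hx, hb1 x hx], fun T hT => ?_⟩
    simp only [Pi.add_apply, mul_add, Finset.sum_add_distrib, ha2 T hT, hb2 T hT, add_zero]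
  zero_mem' := ⟨fun x _ => rfl, fun T _ => by simp⟩
  smul_mem' := by
    rintro c a ⟨ha1, ha2⟩
    refine ⟨fun x hx => by simp [Pi.smul_apply, ha1 x hx], fun T hT => ?_⟩
    have h : ∑ x ∈ T, mfun G pos α x * (c • a) x = c * ∑ x ∈ T, mfun G pos α x * a x := by
      rw [Finset.mul_sum]
      refine Finset.sum_congr rfl fun x _ => ?_
      simp only [Pi.smul_apply, smul_eq_mul]; ring
    rw [h, ha2 T hT, mul_zero]

lemma mem_Wsub [Fintype N] (G : SimpleGraph N) [DecidableRel G.Adj]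
    (pos : N → EuclideanSpace ℝ (Fin n)) (α : ℝ) (Γ : Set N) (P : Finset (Finset N))
    {v : N → ℝ} :
    v ∈ Wsub G pos α Γ P ↔
      (∀ x ∈ Γ, v x = 0) ∧ ∀ T ∈ P, ∑ x ∈ T, mfun G pos α x * v x = 0 :=
  Iff.rfl

theorem stmt9 [Fintype N] [DecidableEq N] (G : SimpleGraph N) [DecidableRel G.Adj]
    (pos : N → EuclideanSpace ℝ (Fin n)) (α : ℝ)
    (hα : 0 ≤ α ∧ α ≤ 2) (hpos : Function.Injective pos)
    (hdist : ∀ x y : N, G.Adj x y → 0 < dist (pos x) (pos y))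
    (hcard : 1 < Fintype.card N) (hconn : G.Connected)
    (Γ : Set N) (hΓ : Γ.Nonempty)
    (P : Finset (Finset N))
    (hPne : ∀ T ∈ P, T.Nonempty)
    (hPdisj : ∀ T ∈ P, ∀ S ∈ P, T ≠ S → Disjoint T S)
    (hPcover : ∀ x : N, ∃ T ∈ P, x ∈ T)
    (Pi : (N → ℝ) → (N → ℝ))
    (hPi : ∀ v : N → ℝ, ∀ T ∈ P, ∀ x ∈ T, Pi v x = avg G pos α T v)
    (K : (N → ℝ) →ₗ[ℝ] (N → ℝ))
    (hKsym : ∀ u v : N → ℝ, ip (K u) v = ip u (K v))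
    (γ γ' : ℝ) (hγ : 0 < γ) (hγγ' : γ ≤ γ')
    (hspec : ∀ v : N → ℝ, (∀ x ∈ Γ, v x = 0) →
      γ * Lform G pos α Finset.univ v v ≤ ip (K v) v ∧
        ip (K v) v ≤ γ' * Lform G pos α Finset.univ v v)
    (f u : N → ℝ) (hu : ∀ x ∈ Γ, u x = 0)
    (hsol : ∀ v : N → ℝ, (∀ x ∈ Γ, v x = 0) → ip (K u) v = ip f v)
    (uH : N → ℝ) (huHV : ∀ x ∈ Γ, uH x = 0)
    (huHmem : ∀ w : N → ℝ, ((∀ x ∈ Γ, w x = 0) ∧ Pi w = 0) → ip (K uH) w = 0)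
    (huHsol : ∀ v : N → ℝ, ((∀ x ∈ Γ, v x = 0) ∧
        (∀ w : N → ℝ, ((∀ x ∈ Γ, w x = 0) ∧ Pi w = 0) → ip (K v) w = 0)) →
      ip (K uH) v = ip f v)
    (Cpi H : ℝ) (hCpi : 0 < Cpi) (hH : 0 < H)
    (happrox : ∀ T ∈ P, ∀ v : N → ℝ,
      Mnorm G pos α T (fun x => v x - Pi v x) ≤ Cpi * H * Lnorm G pos α T v)
    (ftilde : N → ℝ)
    (hm : ∀ x : N, 0 < (1 / 2 : ℝ) * ∑ y ∈ G.neighborFinset x, dist (pos x) (pos y) ^ ((2 : ℝ) - α))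
    (hf : ∀ x : N, f x =
      ((1 / 2 : ℝ) * ∑ y ∈ G.neighborFinset x, dist (pos x) (pos y) ^ ((2 : ℝ) - α)) * ftilde x) :
    Lnorm G pos α Finset.univ (fun x => u x - uH x) ≤
        Cpi * γ⁻¹ * H * Mnorm G pos α Finset.univ (fun x => ftilde x - Pi ftilde x) ∧
      Cpi * γ⁻¹ * H * Mnorm G pos α Finset.univ (fun x => ftilde x - Pi ftilde x) ≤
        Cpi ^ 2 * γ⁻¹ * H ^ 2 * Lnorm G pos α Finset.univ ftilde := by
  classical
  have hmpos : ∀ x : N, 0 < mfun G pos α x := hm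
  -- zero energy implies zero function
  have hconst : ∀ v : N → ℝ, (∀ x ∈ Γ, v x = 0) →
      Lform G pos α Finset.univ v v = 0 → v = 0 := by
    intro v hv hL0
    have hadj : ∀ a b : N, G.Adj a b → v a = v b := by
      intro a b hab
      have h1 : ∀ x ∈ (Finset.univ : Finset N),
          (0:ℝ) ≤ (1/2 : ℝ) * ∑ y ∈ G.neighborFinset x,
            ((v x - v y) * (v x - v y)) / dist (pos x) (pos y) ^ α := by
        intro x _
        exact mul_nonneg (by norm_num) (Finset.sum_nonneg fun y _ =>
          div_nonneg (mul_self_nonneg _) (Real.rpow_nonneg dist_nonneg _))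
      have h2 := (Finset.sum_eq_zero_iff_of_nonneg h1).1 hL0 a (Finset.mem_univ a)
      have h3 : ∑ y ∈ G.neighborFinset a,
          ((v a - v y) * (v a - v y)) / dist (pos a) (pos y) ^ α = 0 := by linarith
      have h4 := (Finset.sum_eq_zero_iff_of_nonneg (fun y _ =>
        div_nonneg (mul_self_nonneg _) (Real.rpow_nonneg dist_nonneg _))).1 h3 b
        (by rwa [SimpleGraph.mem_neighborFinset])
      have hd : (0:ℝ) < dist (pos a) (pos b) ^ α := Real.rpow_pos_of_pos (hdist a b hab) α
      rcases div_eq_zero_iff.1 h4 with h | h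
      · have := mul_self_eq_zero.1 h; linarith
      · exact absurd h hd.ne'
    obtain ⟨x0, hx0⟩ := hΓ
    have hwalk : ∀ (a b : N), ∀ _w : G.Walk a b, v a = v b := by
      intro a b w
      induction w with
      | nil => rfl
      | cons h p ih => exact (hadj _ _ h).trans ih
    funext x
    have hx := hwalk x x0 (hconn.preconnected x x0).some
    rw [_root_.Pi.zero_apply, hx, hv x0 hx0]
  have posdef : ∀ v : N → ℝ, (∀ x ∈ Γ, v x = 0) → ip (K v) v = 0 → v = 0 := by
    intro v hv h0
    refine hconst v hv ?_
    have h1 := (hspec v hv).1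
    have h2 := Lform_nonneg G pos α Finset.univ v
    nlinarith
  have hBapp : ∀ a b : N → ℝ, Bform K a b = ip (K a) b := fun a b => rfl
  have hBsymm : ∀ a b : N → ℝ, Bform K a b = Bform K b a := by
    intro a b
    rw [hBapp, hBapp, hKsym a b, ip_comm]
  have hBrefl : (Bform K).IsRefl := fun a b h => by rw [hBsymm]; exact h
  have hrest : ((Bform K).restrict (Wsub G pos α Γ P)).Nondegenerate := by
    refine ⟨?_, ?_⟩
    all_goals
      rintro ⟨w, hw⟩ h
      obtain ⟨hw1, hw2⟩ := (mem_Wsub G pos α Γ P).1 hw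
      have h2 : ip (K w) w = 0 := h ⟨w, hw⟩
      exact Subtype.ext (posdef w hw1 h2)
  have hcompl := (Bform K).isCompl_orthogonal_of_restrict_nondegenerate hBrefl hrest
  set e : N → ℝ := fun x => u x - uH x with he_def
  have hsub : (fun x => u x - uH x) = u - uH := rfl
  have heΓ : ∀ x ∈ Γ, e x = 0 := by
    intro x hx
    show u x - uH x = 0
    rw [hu x hx, huHV x hx, sub_zero]
  have hWmem : ∀ w2 : N → ℝ, (∀ x ∈ Γ, w2 x = 0) → Pi w2 = 0 →
      w2 ∈ Wsub G pos α Γ P := by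
    intro w2 h1 h2
    refine (mem_Wsub G pos α Γ P).2 ⟨h1, fun T hT => ?_⟩
    obtain ⟨x, hx⟩ := hPne T hT
    have havg : avg G pos α T w2 = 0 := by
      rw [← hPi w2 T hT x hx, h2, _root_.Pi.zero_apply]
    have hden : 0 < Mform G pos α T (fun _ => 1) (fun _ => 1) := by
      rw [Mform_eq]
      exact Finset.sum_pos (fun y _ => by simpa using hmpos y) ⟨x, hx⟩
    have hnum : Mform G pos α T w2 (fun _ => 1) = 0 := by
      rcases div_eq_zero_iff.1 havg with h | h
      · exact h
      · exact absurd h hden.ne'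
    rw [Mform_eq] at hnum
    simpa using hnum
  have hetop : e ∈ (Wsub G pos α Γ P) ⊔ (Bform K).orthogonal (Wsub G pos α Γ P) := by
    rw [hcompl.sup_eq_top]; trivial
  obtain ⟨w, hw, z, hz, hwz⟩ := Submodule.mem_sup.1 hetop
  obtain ⟨hw1, hw2⟩ := (mem_Wsub G pos α Γ P).1 hw
  have hzΓ : ∀ x ∈ Γ, z x = 0 := by
    intro x hx
    have h1 : w x + z x = e x := congrFun hwz x
    have h2 := heΓ x hx
    have h3 := hw1 x hx
    linarith
  have hzorth : ∀ w2 ∈ Wsub G pos α Γ P, ip (K w2) z = 0 := by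
    intro w2 hw2m
    exact (LinearMap.BilinForm.mem_orthogonal_iff.1 hz) w2 hw2m
  have hzH : ∀ w2 : N → ℝ, ((∀ x ∈ Γ, w2 x = 0) ∧ Pi w2 = 0) → ip (K z) w2 = 0 := by
    rintro w2 ⟨h1, h2⟩
    calc ip (K z) w2 = ip z (K w2) := hKsym z w2
      _ = ip (K w2) z := ip_comm _ _
      _ = 0 := hzorth w2 (hWmem w2 h1 h2)
  have hGal : ip (K e) z = 0 := by
    have h1 : ip (K u) z = ip f z := hsol z hzΓ
    have h2 : ip (K uH) z = ip f z := huHsol z ⟨hzΓ, hzH⟩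
    rw [he_def, hsub, map_sub, ip_sub_left, h1, h2, sub_self]
  have hz0 : z = 0 := by
    refine posdef z hzΓ ?_
    have hBwz : ip (K w) z = 0 := hzorth w hw
    have hsum : ip (K (w + z)) z = ip (K w) z + ip (K z) z := by
      rw [map_add]
      simp [ip, _root_.Pi.add_apply, add_mul, Finset.sum_add_distrib]
    rw [hwz, hGal, hBwz] at hsum
    linarith
  have hew : e = w := by rw [← hwz, hz0, add_zero]
  have heW2 : ∀ T ∈ P, ∑ x ∈ T, mfun G pos α x * e x = 0 := by
    intro T hT
    rw [hew]
    exact hw2 T hT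
  have hPie : ∀ x : N, Pi e x = 0 := by
    intro x
    obtain ⟨T, hT, hx⟩ := hPcover x
    rw [hPi e T hT x hx]
    unfold avg
    have hnum : Mform G pos α T e (fun _ => 1) = 0 := by
      rw [Mform_eq]
      simpa using heW2 T hT
    rw [hnum, zero_div]
  -- global splittings
  have hLsplit : ∀ v : N → ℝ,
      Lform G pos α Finset.univ v v = ∑ T ∈ P, Lform G pos α T v v := by
    intro v
    unfold Lform
    exact (sum_partition hPdisj hPcover _).symm
  have hMsplit : ∀ v : N → ℝ,
      Mform G pos α Finset.univ v v = ∑ T ∈ P, Mform G pos α T v v := by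
    intro v
    rw [Mform_eq, ← sum_partition hPdisj hPcover (fun x => mfun G pos α x * (v x * v x))]
    exact Finset.sum_congr rfl fun T _ => (Mform_eq G pos α T v v).symm
  -- global approximation bound
  have happroxG : ∀ v : N → ℝ,
      Mnorm G pos α Finset.univ (fun x => v x - Pi v x) ≤
        Cpi * H * Lnorm G pos α Finset.univ v := by
    intro v
    have hCH : (0:ℝ) ≤ Cpi * H := le_of_lt (mul_pos hCpi hH)
    have hper : ∀ T ∈ P,
        Mform G pos α T (fun x => v x - Pi v x) (fun x => v x - Pi v x) ≤
          (Cpi * H) ^ 2 * Lform G pos α T v v := by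
      intro T hT
      have h1 : Real.sqrt (Mform G pos α T (fun x => v x - Pi v x) (fun x => v x - Pi v x)) ≤
          Cpi * H * Lnorm G pos α T v := happrox T hT v
      have h2 := sq_le_of_sqrt_le (Mform_nonneg G pos α T (fun x => v x - Pi v x)) h1
      calc Mform G pos α T (fun x => v x - Pi v x) (fun x => v x - Pi v x)
          ≤ (Cpi * H * Lnorm G pos α T v) ^ 2 := h2
        _ = (Cpi * H) ^ 2 * (Lnorm G pos α T v) ^ 2 := by ring
        _ = (Cpi * H) ^ 2 * Lform G pos α T v v := by
            rw [Lnorm, Real.sq_sqrt (Lform_nonneg G pos α T v)]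
    have hglob : Mform G pos α Finset.univ (fun x => v x - Pi v x) (fun x => v x - Pi v x) ≤
        (Cpi * H) ^ 2 * Lform G pos α Finset.univ v v := by
      rw [hMsplit, hLsplit v, Finset.mul_sum]
      exact Finset.sum_le_sum hper
    calc Mnorm G pos α Finset.univ (fun x => v x - Pi v x)
        = Real.sqrt (Mform G pos α Finset.univ (fun x => v x - Pi v x)
            (fun x => v x - Pi v x)) := rfl
      _ ≤ Real.sqrt ((Cpi * H) ^ 2 * Lform G pos α Finset.univ v v) := Real.sqrt_le_sqrt hglob
      _ = Cpi * H * Lnorm G pos α Finset.univ v := by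
          rw [Real.sqrt_mul (sq_nonneg _), Real.sqrt_sq hCH, Lnorm]
  -- energy identity
  have hgam : γ * Lform G pos α Finset.univ e e ≤ ip (K e) e := (hspec e heΓ).1
  have hKee : ip (K e) e = ip f e := by
    have h1 : ip (K u) e = ip f e := hsol e heΓ
    have h2 : ip (K uH) e = 0 := by
      have ha : ip (K uH) u = ip f uH := by
        calc ip (K uH) u = ip uH (K u) := hKsym _ _
          _ = ip (K u) uH := ip_comm _ _
          _ = ip f uH := hsol uH huHV
      have hb : ip (K uH) uH = ip f uH := huHsol uH ⟨huHV, huHmem⟩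
      rw [he_def, ip_sub_right, ha, hb, sub_self]
    calc ip (K e) e = ip (K u) e - ip (K uH) e := by
          rw [he_def, hsub, map_sub, ip_sub_left]
      _ = ip f e := by rw [h1, h2, sub_zero]
  -- representation of the load term
  have hfe : ip f e = ∑ x, mfun G pos α x * ((ftilde x - Pi ftilde x) * e x) := by
    have hzero : ∑ x, mfun G pos α x * (Pi ftilde x * e x) = 0 := by
      rw [← sum_partition hPdisj hPcover (fun x => mfun G pos α x * (Pi ftilde x * e x))]
      refine Finset.sum_eq_zero fun T hT => ?_
      have hc : ∀ x ∈ T, mfun G pos α x * (Pi ftilde x * e x)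
          = avg G pos α T ftilde * (mfun G pos α x * e x) := by
        intro x hx
        rw [hPi ftilde T hT x hx]; ring
      rw [Finset.sum_congr rfl hc, ← Finset.mul_sum, heW2 T hT, mul_zero]
    calc ip f e = ∑ x, mfun G pos α x * (ftilde x * e x) := by
          refine Finset.sum_congr rfl fun x _ => ?_
          rw [hf x]
          show (mfun G pos α x * ftilde x) * e x = _
          ring
      _ = ∑ x, (mfun G pos α x * ((ftilde x - Pi ftilde x) * e x)
            + mfun G pos α x * (Pi ftilde x * e x)) := by
          refine Finset.sum_congr rfl fun x _ => ?_
          ring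
      _ = ∑ x, mfun G pos α x * ((ftilde x - Pi ftilde x) * e x)
            + ∑ x, mfun G pos α x * (Pi ftilde x * e x) := Finset.sum_add_distrib
      _ = ∑ x, mfun G pos α x * ((ftilde x - Pi ftilde x) * e x) := by rw [hzero, add_zero]
  -- Cauchy-Schwarz
  have hCS : ∑ x, mfun G pos α x * ((ftilde x - Pi ftilde x) * e x) ≤
      Mnorm G pos α Finset.univ (fun x => ftilde x - Pi ftilde x) *
        Mnorm G pos α Finset.univ e := by
    have h := weighted_cs (mfun G pos α) (fun x => ftilde x - Pi ftilde x) e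
      (fun x => (hmpos x).le)
    calc ∑ x, mfun G pos α x * ((ftilde x - Pi ftilde x) * e x)
        ≤ Real.sqrt (∑ x, mfun G pos α x * ((ftilde x - Pi ftilde x) * (ftilde x - Pi ftilde x))) *
          Real.sqrt (∑ x, mfun G pos α x * (e x * e x)) := h
      _ = _ := by rw [Mnorm, Mnorm, Mform_eq, Mform_eq]
  have hMe : Mnorm G pos α Finset.univ e ≤ Cpi * H * Lnorm G pos α Finset.univ e := by
    have h := happroxG e
    have he2 : (fun x => e x - Pi e x) = e := funext fun x => by rw [hPie x, sub_zero]
    rwa [he2] at h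
  have hX0 : (0:ℝ) ≤ Lnorm G pos α Finset.univ e := Real.sqrt_nonneg _
  have hA0 : (0:ℝ) ≤ Mnorm G pos α Finset.univ (fun x => ftilde x - Pi ftilde x) :=
    Real.sqrt_nonneg _
  have hchain : γ * (Lnorm G pos α Finset.univ e) ^ 2 ≤
      Mnorm G pos α Finset.univ (fun x => ftilde x - Pi ftilde x) *
        (Cpi * H * Lnorm G pos α Finset.univ e) := by
    have hXsq : (Lnorm G pos α Finset.univ e) ^ 2 = Lform G pos α Finset.univ e e := by
      rw [Lnorm, Real.sq_sqrt (Lform_nonneg G pos α Finset.univ e)]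
    calc γ * (Lnorm G pos α Finset.univ e) ^ 2
        = γ * Lform G pos α Finset.univ e e := by rw [hXsq]
      _ ≤ ip (K e) e := hgam
      _ = ∑ x, mfun G pos α x * ((ftilde x - Pi ftilde x) * e x) := by rw [hKee, hfe]
      _ ≤ Mnorm G pos α Finset.univ (fun x => ftilde x - Pi ftilde x) *
            Mnorm G pos α Finset.univ e := hCS
      _ ≤ Mnorm G pos α Finset.univ (fun x => ftilde x - Pi ftilde x) *
            (Cpi * H * Lnorm G pos α Finset.univ e) := mul_le_mul_of_nonneg_left hMe hA0
  constructor
  · rcases hX0.eq_or_lt with hX | hX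
    · rw [← hX]
      have := mul_nonneg (mul_nonneg (mul_nonneg hCpi.le (inv_nonneg.2 hγ.le)) hH.le) hA0
      exact this
    · have h2 : γ * Lnorm G pos α Finset.univ e ≤
          Cpi * H * Mnorm G pos α Finset.univ (fun x => ftilde x - Pi ftilde x) := by
        have h3 : (γ * Lnorm G pos α Finset.univ e) * Lnorm G pos α Finset.univ e ≤
            (Cpi * H * Mnorm G pos α Finset.univ (fun x => ftilde x - Pi ftilde x)) *
              Lnorm G pos α Finset.univ e := by nlinarith [hchain]
        exact le_of_mul_le_mul_right h3 hX
      calc Lnorm G pos α Finset.univ e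
          = γ⁻¹ * (γ * Lnorm G pos α Finset.univ e) := by
            field_simp
        _ ≤ γ⁻¹ * (Cpi * H * Mnorm G pos α Finset.univ (fun x => ftilde x - Pi ftilde x)) :=
            mul_le_mul_of_nonneg_left h2 (inv_nonneg.2 hγ.le)
        _ = Cpi * γ⁻¹ * H * Mnorm G pos α Finset.univ (fun x => ftilde x - Pi ftilde x) := by
            ring
  · have h2 := happroxG ftilde
    calc Cpi * γ⁻¹ * H * Mnorm G pos α Finset.univ (fun x => ftilde x - Pi ftilde x)
        ≤ Cpi * γ⁻¹ * H * (Cpi * H * Lnorm G pos α Finset.univ ftilde) := by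
          refine mul_le_mul_of_nonneg_left h2 ?_
          positivity
      _ = Cpi ^ 2 * γ⁻¹ * H ^ 2 * Lnorm G pos α Finset.univ ftilde := by ring
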